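/- Let C be a convex body in ℍ^d and H a supporting hyperplane of C. Then width_H(C) equals the maximum over points c ∈ C of dist(c, H). -/

import Mathlib

noncomputable section

namespace HypSpace

/-- Inverse hyperbolic cosine. -/
def arcosh (x : ℝ) : ℝ := Real.log (x + Real.sqrt (x ^ 2 - 1))

/-- The Minkowski bilinear form on `ℝ^{d+1}` (signature `(d,1)`, the last
coordinate being timelike). -/
def mink (d : ℕ) (x y : EuclideanSpace ℝ (Fin (d + 1))) : ℝ :=
  (∑ i : Fin d, x i.castSucc * y i.castSucc) - x (Fin.last d) * y (Fin.last d)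

/-- The hyperboloid model of `d`-dimensional hyperbolic space: the upper sheet
of the two-sheeted hyperboloid `mink x x = -1`. -/
def Pt (d : ℕ) : Type := {x : EuclideanSpace ℝ (Fin (d + 1)) // mink d x x = -1 ∧ 0 < x (Fin.last d)}

variable {d : ℕ}

/-- Hyperbolic distance between two points of `ℍ^d`. -/
def hdist (p q : Pt d) : ℝ := arcosh (-(mink d p.1 q.1))

/-- The geodesic segment between `a` and `b`, described metrically via betweenness
(hyperbolic space is uniquely geodesic). -/
def seg (a b : Pt d) : Set (Pt d) := {p | hdist a p + hdist p b = hdist a b}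

/-- A set is (geodesically) convex if it contains the segment between any two of its points. -/
def IsConvexSet (C : Set (Pt d)) : Prop := ∀ a ∈ C, ∀ b ∈ C, seg a b ⊆ C

/-- The convex hull: the smallest convex set containing `A`. -/
def chull (A : Set (Pt d)) : Set (Pt d) := ⋂₀ {C | IsConvexSet C ∧ A ⊆ C}

/-- The totally geodesic hyperplane with (spacelike) normal vector `v`. -/
def plane (v : EuclideanSpace ℝ (Fin (d + 1))) : Set (Pt d) := {p | mink d v p.1 = 0}

/-- A hyperplane of `ℍ^d`: the trace on the hyperboloid of a linear hyperplane
with spacelike unit normal. -/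
def IsHyperplane (H : Set (Pt d)) : Prop := ∃ v, mink d v v = 1 ∧ H = plane v

/-- Distance from a point to a set. -/
def distPS (p : Pt d) (S : Set (Pt d)) : ℝ := sInf (hdist p '' S)

/-- Distance between two sets. -/
def distSS (A B : Set (Pt d)) : ℝ := sInf {r | ∃ a ∈ A, ∃ b ∈ B, hdist a b = r}

/-- `h` is the orthogonal projection of `g` onto `H`: the point of `H`
realizing the distance from `g` to `H`.  For a hyperplane `H` with `a ∈ H`,
`IsProj b H a` also expresses that `H` is orthogonal to the segment `ab` at `a`. -/
def IsProj (g : Pt d) (H : Set (Pt d)) (h : Pt d) : Prop :=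
  h ∈ H ∧ ∀ k ∈ H, hdist g h ≤ hdist g k

/-- Two hyperplanes are ultraparallel if they are disjoint and not asymptotically
parallel (their distance is positive, i.e. they admit a common perpendicular). -/
def Ultraparallel (H J : Set (Pt d)) : Prop :=
  IsHyperplane H ∧ IsHyperplane J ∧ H ∩ J = ∅ ∧ 0 < distSS H J

/-- `p` is an interior point of `C`. -/
def IsIntr (C : Set (Pt d)) (p : Pt d) : Prop := ∃ ε > 0, ∀ q, hdist p q < ε → q ∈ C

/-- `p` is a boundary point of the (closed) set `C`. -/
def IsBdry (C : Set (Pt d)) (p : Pt d) : Prop := p ∈ C ∧ ¬ IsIntr C p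

/-- `C` is bounded. -/
def IsBddSet (C : Set (Pt d)) : Prop := ∃ R, ∀ a ∈ C, ∀ b ∈ C, hdist a b ≤ R

/-- `C` is closed. -/
def IsClosedSet (C : Set (Pt d)) : Prop :=
  ∀ p : Pt d, (∀ ε > 0, ∃ q ∈ C, hdist p q < ε) → p ∈ C

/-- A convex body: a compact (closed and bounded) convex set with nonempty interior. -/
def IsBody (C : Set (Pt d)) : Prop :=
  IsConvexSet C ∧ IsBddSet C ∧ IsClosedSet C ∧ ∃ p, IsIntr C p

/-- The hyperplane `H` supports `C`: it meets `C` but misses its interior. -/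
def Supports (H C : Set (Pt d)) : Prop :=
  IsHyperplane H ∧ (H ∩ C).Nonempty ∧ ∀ p, IsIntr C p → p ∉ H

/-- The width of `C` determined by `H`, as the maximum distance from `H`
to a point of `C`. -/
def width (H C : Set (Pt d)) : ℝ := sSup ((fun c => distPS c H) '' C)

/-- The width of `C` determined by `H`, as the distance from `H` to a farthest
supporting hyperplane of `C` ultraparallel to `H`. -/
def widthUP (H C : Set (Pt d)) : ℝ :=
  sSup {r | ∃ J, Supports J C ∧ Ultraparallel H J ∧ distSS H J = r}

/-- The thickness of `C`: the minimum width over supporting hyperplanes. -/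
def thickness (C : Set (Pt d)) : ℝ := sInf {r | ∃ H, Supports H C ∧ width H C = r}

/-- The diameter of `C`. -/
def diam (C : Set (Pt d)) : ℝ := sSup {r | ∃ a ∈ C, ∃ b ∈ C, hdist a b = r}

/-- A body of constant width `δ`. -/
def ConstWidth (W : Set (Pt d)) (δ : ℝ) : Prop :=
  IsBody W ∧ ∀ H, Supports H W → width H W = δ

/-- A complete set of diameter `δ`. -/
def CompleteSet (C : Set (Pt d)) (δ : ℝ) : Prop :=
  diam C = δ ∧ ∀ x, x ∉ C → diam (C ∪ {x}) > δ

/-- A body of constant diameter `δ`. -/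
def ConstDiam (C : Set (Pt d)) (δ : ℝ) : Prop :=
  diam C = δ ∧ ∀ p, IsBdry C p → ∃ p' ∈ C, hdist p p' = δ


lemma arcosh_one : arcosh 1 = 0 := by simp [arcosh]

lemma sqrt_sub_one_lt (x : ℝ) (hx : 1 ≤ x) : Real.sqrt (x^2 - 1) < x := by
  have : x^2 - 1 < x^2 := by nlinarith
  calc Real.sqrt (x^2-1) < Real.sqrt (x^2) := by
        apply Real.sqrt_lt_sqrt (by nlinarith) this
    _ = x := Real.sqrt_sq (by linarith)

lemma one_le_arg (x : ℝ) (hx : 1 ≤ x) : 1 ≤ x + Real.sqrt (x^2-1) := by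
  have := Real.sqrt_nonneg (x^2-1); linarith

lemma arcosh_nonneg (x : ℝ) (hx : 1 ≤ x) : 0 ≤ arcosh x :=
  Real.log_nonneg (one_le_arg x hx)

lemma arcosh_pos (x : ℝ) (hx : 1 < x) : 0 < arcosh x := by
  apply Real.log_pos
  have := Real.sqrt_nonneg (x^2-1); linarith

lemma arcosh_mono {x y : ℝ} (hx : 1 ≤ x) (h : x ≤ y) : arcosh x ≤ arcosh y := by
  apply Real.log_le_log (by linarith [Real.sqrt_nonneg (x^2-1)])
  have h2 : Real.sqrt (x^2-1) ≤ Real.sqrt (y^2-1) := by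
    apply Real.sqrt_le_sqrt; nlinarith
  linarith

lemma le_exp_arcosh (x : ℝ) (hx : 1 ≤ x) : x ≤ Real.exp (arcosh x) := by
  rw [arcosh, Real.exp_log (by linarith [Real.sqrt_nonneg (x^2-1)])]
  linarith [Real.sqrt_nonneg (x^2-1)]

lemma arcosh_cosh {t : ℝ} (ht : 0 ≤ t) : arcosh (Real.cosh t) = t := by
  rw [arcosh]
  have h1 : Real.cosh t ^ 2 - 1 = Real.sinh t ^ 2 := by
    have := Real.cosh_sq_sub_sinh_sq t; linarith
  rw [h1, Real.sqrt_sq (Real.sinh_nonneg_iff.2 ht), Real.cosh_eq, Real.sinh_eq]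
  have : (Real.exp t + Real.exp (-t))/2 + (Real.exp t - Real.exp (-t))/2 = Real.exp t := by ring
  rw [this, Real.log_exp]

lemma continuousAt_arcosh {x : ℝ} (hx : 1 ≤ x) : ContinuousAt arcosh x := by
  apply ContinuousAt.comp (g := Real.log)
  · exact Real.continuousAt_log (by linarith [Real.sqrt_nonneg (x^2-1)])
  · fun_prop

/- ### mink lemmas -/

lemma mink_comm (x y : EuclideanSpace ℝ (Fin (d+1))) : mink d x y = mink d y x := by
  unfold mink
  rw [mul_comm (x (Fin.last d))]
  congr 1
  exact Finset.sum_congr rfl fun i _ => mul_comm _ _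

lemma mink_add_left (x y z : EuclideanSpace ℝ (Fin (d+1))) :
    mink d (x + y) z = mink d x z + mink d y z := by
  simp only [mink, PiLp.add_apply, add_mul, Finset.sum_add_distrib]
  ring

lemma mink_smul_left (r : ℝ) (x z : EuclideanSpace ℝ (Fin (d+1))) :
    mink d (r • x) z = r * mink d x z := by
  unfold mink
  simp only [PiLp.smul_apply, smul_eq_mul, Finset.mul_sum]
  rw [mul_sub, Finset.mul_sum]
  congr 1
  · exact Finset.sum_congr rfl fun i _ => by ring
  · ring

lemma mink_sub_left (x y z : EuclideanSpace ℝ (Fin (d+1))) :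
    mink d (x - y) z = mink d x z - mink d y z := by
  simp only [mink, PiLp.sub_apply, sub_mul, Finset.sum_sub_distrib]
  ring

lemma mink_neg_left (x z : EuclideanSpace ℝ (Fin (d+1))) :
    mink d (-x) z = -mink d x z := by
  simp only [mink, PiLp.neg_apply, neg_mul, Finset.sum_neg_distrib]
  ring

lemma mink_add_right (x y z : EuclideanSpace ℝ (Fin (d+1))) :
    mink d x (y + z) = mink d x y + mink d x z := by
  rw [mink_comm, mink_add_left, mink_comm y x, mink_comm z x]

lemma mink_smul_right (r : ℝ) (x z : EuclideanSpace ℝ (Fin (d+1))) :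
    mink d x (r • z) = r * mink d x z := by
  rw [mink_comm, mink_smul_left, mink_comm z x]

lemma mink_sub_right (x y z : EuclideanSpace ℝ (Fin (d+1))) :
    mink d x (y - z) = mink d x y - mink d x z := by
  rw [mink_comm, mink_sub_left, mink_comm y x, mink_comm z x]

lemma continuous_mink (v : EuclideanSpace ℝ (Fin (d+1))) :
    Continuous (fun x : EuclideanSpace ℝ (Fin (d+1)) => mink d v x) := by
  unfold mink; fun_prop


/- ### Pt facts -/

lemma pt_last_sq (p : Pt d) :
    p.1 (Fin.last d) ^ 2 = 1 + ∑ i : Fin d, p.1 i.castSucc ^ 2 := by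
  have h := p.2.1
  unfold mink at h
  have : ∑ i : Fin d, p.1 i.castSucc * p.1 i.castSucc = ∑ i : Fin d, p.1 i.castSucc ^ 2 :=
    Finset.sum_congr rfl fun i _ => by ring
  nlinarith [h]

lemma pt_one_le_last (p : Pt d) : 1 ≤ p.1 (Fin.last d) := by
  have h := pt_last_sq p
  have h2 : 0 ≤ ∑ i : Fin d, p.1 i.castSucc ^ 2 := Finset.sum_nonneg fun i _ => sq_nonneg _
  nlinarith [p.2.2]

/-- Reverse Cauchy-Schwarz for raw vectors. -/
lemma mink_le_neg_one' (x y : EuclideanSpace ℝ (Fin (d+1)))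
    (hx : mink d x x = -1) (hy : mink d y y = -1)
    (hxt : 0 < x (Fin.last d)) (hyt : 0 < y (Fin.last d)) :
    mink d x y ≤ -1 := by
  set A2 := ∑ i : Fin d, x i.castSucc ^ 2 with hA2
  set B2 := ∑ i : Fin d, y i.castSucc ^ 2 with hB2
  set S := ∑ i : Fin d, x i.castSucc * y i.castSucc with hS
  have hA2n : 0 ≤ A2 := Finset.sum_nonneg fun i _ => sq_nonneg _
  have hB2n : 0 ≤ B2 := Finset.sum_nonneg fun i _ => sq_nonneg _
  have hCS : S ^ 2 ≤ A2 * B2 := Finset.sum_mul_sq_le_sq_mul_sq _ _ _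
  have hxt2 : x (Fin.last d) ^ 2 = 1 + A2 := pt_last_sq ⟨x, hx, hxt⟩
  have hyt2 : y (Fin.last d) ^ 2 = 1 + B2 := pt_last_sq ⟨y, hy, hyt⟩
  have hmink : mink d x y = S - x (Fin.last d) * y (Fin.last d) := rfl
  -- (x_t y_t)^2 = (1+A2)(1+B2) ≥ (1+S)^2 when 1+S ≥ 0
  rw [hmink]
  by_cases hs : S + 1 ≤ 0
  · nlinarith
  · push_neg at hs
    have key : (S + 1)^2 ≤ (x (Fin.last d) * y (Fin.last d))^2 := by
      have h2s : 2*S ≤ A2 + B2 := by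
        rcases le_or_gt (2*S) (A2+B2) with h|h
        · exact h
        · nlinarith [sq_nonneg (A2 - B2)]
      have : (S+1)^2 ≤ (1+A2)*(1+B2) := by nlinarith
      calc (S+1)^2 ≤ (1+A2)*(1+B2) := this
        _ = x (Fin.last d)^2 * y (Fin.last d)^2 := by rw [hxt2, hyt2]
        _ = (x (Fin.last d) * y (Fin.last d))^2 := by ring
    have hpos : 0 < x (Fin.last d) * y (Fin.last d) := mul_pos hxt hyt
    nlinarith

lemma mink_le_neg_one (p q : Pt d) : mink d p.1 q.1 ≤ -1 :=
  mink_le_neg_one' _ _ p.2.1 q.2.1 p.2.2 q.2.2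

lemma one_le_neg_mink (p q : Pt d) : 1 ≤ -mink d p.1 q.1 := by
  linarith [mink_le_neg_one p q]

lemma hdist_comm (p q : Pt d) : hdist p q = hdist q p := by
  unfold hdist; rw [mink_comm]

lemma hdist_nonneg (p q : Pt d) : 0 ≤ hdist p q :=
  arcosh_nonneg _ (one_le_neg_mink p q)

lemma hdist_self (p : Pt d) : hdist p p = 0 := by
  unfold hdist; rw [p.2.1]; norm_num [arcosh_one]

lemma one_le_sqrt_one_add_sq (a : ℝ) : 1 ≤ Real.sqrt (1 + a^2) := by
  have h : (1:ℝ) ≤ 1 + a^2 := by nlinarith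
  nlinarith [Real.sq_sqrt (by positivity : (0:ℝ) ≤ 1 + a^2),
    Real.sqrt_nonneg (1 + a^2)]

/-- Existence of the foot of the perpendicular from `p` to `plane v`. -/
lemma exists_proj (v : EuclideanSpace ℝ (Fin (d+1))) (hv : mink d v v = 1) (p : Pt d) :
    ∃ q0 : Pt d, mink d v q0.1 = 0 ∧
      mink d p.1 q0.1 = -Real.sqrt (1 + (mink d v p.1)^2) ∧
      p.1 = (mink d v p.1) • v + Real.sqrt (1 + (mink d v p.1)^2) • q0.1 := by
  set a := mink d v p.1 with ha
  set s := Real.sqrt (1 + a^2) with hs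
  have hs2 : s^2 = 1 + a^2 := Real.sq_sqrt (by positivity)
  have hs1 : 1 ≤ s := one_le_sqrt_one_add_sq a
  have hsne : s ≠ 0 := by linarith
  set q0v : EuclideanSpace ℝ (Fin (d+1)) := s⁻¹ • (p.1 - a • v) with hq0v
  have hpv : mink d p.1 v = a := by rw [ha, mink_comm]
  have hpq0 : mink d p.1 q0v = -s := by
    simp only [hq0v, mink_smul_right, mink_sub_right]
    rw [p.2.1, hpv]
    field_simp
    nlinarith
  have hvq0 : mink d v q0v = 0 := by
    simp only [hq0v, mink_smul_right, mink_sub_right]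
    rw [hv]
    ring
  have hq0q0 : mink d q0v q0v = -1 := by
    simp only [hq0v, mink_smul_left, mink_smul_right, mink_sub_left, mink_sub_right]
    rw [p.2.1, hv, hpv]
    field_simp
    nlinarith
  have hq0t2 : q0v (Fin.last d) ^ 2 = 1 + ∑ i : Fin d, q0v i.castSucc ^ 2 := by
    have h := hq0q0
    unfold mink at h
    have : ∑ i : Fin d, q0v i.castSucc * q0v i.castSucc = ∑ i : Fin d, q0v i.castSucc ^ 2 :=
      Finset.sum_congr rfl fun i _ => by ring
    nlinarith [h]
  have hq0tpos : 0 < q0v (Fin.last d) := by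
    rcases lt_trichotomy (q0v (Fin.last d)) 0 with h|h|h
    · exfalso
      have hnegPt : mink d (-q0v) (-q0v) = -1 := by
        rw [mink_neg_left, mink_comm, mink_neg_left, mink_comm, hq0q0]; ring
      have hnegt : 0 < (-q0v) (Fin.last d) := by
        have : (-q0v) (Fin.last d) = -(q0v (Fin.last d)) := rfl
        rw [this]; linarith
      have := mink_le_neg_one' p.1 (-q0v) p.2.1 hnegPt p.2.2 hnegt
      rw [mink_comm, mink_neg_left, mink_comm, hpq0] at this
      linarith
    · exfalso
      have h2 : 0 ≤ ∑ i : Fin d, q0v i.castSucc ^ 2 := Finset.sum_nonneg fun i _ => sq_nonneg _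
      rw [h] at hq0t2; nlinarith
    · exact h
  refine ⟨⟨q0v, hq0q0, hq0tpos⟩, hvq0, hpq0, ?_⟩
  show p.1 = a • v + s • q0v
  rw [hq0v, smul_smul, mul_inv_cancel₀ hsne, one_smul]
  abel

/-- Distance from a point to a hyperplane. -/
lemma distPS_plane (v : EuclideanSpace ℝ (Fin (d+1))) (hv : mink d v v = 1) (p : Pt d) :
    distPS p (plane v) = arcosh (Real.sqrt (1 + (mink d v p.1)^2)) := by
  obtain ⟨q0, hq0H, hpq0, hdecomp⟩ := exists_proj v hv p
  set a := mink d v p.1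
  set s := Real.sqrt (1 + a^2) with hs
  have hs1 : 1 ≤ s := one_le_sqrt_one_add_sq a
  have hlb : ∀ r ∈ hdist p '' plane v, arcosh s ≤ r := by
    rintro r ⟨k, hk, rfl⟩
    have hpk : mink d p.1 k.1 ≤ -s := by
      have : mink d p.1 k.1 = a * mink d v k.1 + s * mink d q0.1 k.1 := by
        rw [hdecomp, mink_add_left, mink_smul_left, mink_smul_left]
      rw [this, hk, mul_zero, zero_add]
      nlinarith [mink_le_neg_one q0 k]
    have h2 : arcosh s ≤ arcosh (-(mink d p.1 k.1)) := arcosh_mono hs1 (by linarith)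
    simpa [hdist] using h2
  have hmem : arcosh s ∈ hdist p '' plane v := by
    refine ⟨q0, hq0H, ?_⟩
    unfold hdist
    rw [hpq0]; norm_num
  exact le_antisymm (csInf_le ⟨arcosh s, hlb⟩ hmem) (le_csInf ⟨_, hmem⟩ hlb)

/-- Near an interior-style point on a hyperplane there are points strictly on the
positive side. -/
lemma exists_near_pos_side (p : Pt d) (w : EuclideanSpace ℝ (Fin (d+1)))
    (hw : mink d w w = 1) (hwp : mink d w p.1 = 0) {ε : ℝ} (hε : 0 < ε) :
    ∃ q : Pt d, hdist p q < ε ∧ 0 < mink d w q.1 := by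
  set wt := |w (Fin.last d)| + 1 with hwt
  have hwtpos : (0:ℝ) < wt := by positivity
  set t := min (ε/2) (Real.arsinh (1/wt)) with ht
  have htpos : 0 < t := lt_min (by linarith) (Real.arsinh_pos_iff.2 (by positivity))
  have htε : t < ε := lt_of_le_of_lt (min_le_left _ _) (by linarith)
  have hsinh : Real.sinh t ≤ 1/wt := by
    calc Real.sinh t ≤ Real.sinh (Real.arsinh (1/wt)) :=
          Real.sinh_le_sinh.2 (min_le_right _ _)
      _ = 1/wt := Real.sinh_arsinh _
  have hsinhpos : 0 < Real.sinh t := Real.sinh_pos_iff.2 htpos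
  set qv : EuclideanSpace ℝ (Fin (d+1)) := Real.cosh t • p.1 + Real.sinh t • w with hqv
  have hwpm : mink d p.1 w = 0 := by rw [mink_comm]; exact hwp
  have hqq : mink d qv qv = -1 := by
    simp only [hqv, mink_add_left, mink_add_right, mink_smul_left, mink_smul_right]
    rw [p.2.1, hw, hwp, hwpm]
    nlinarith [Real.cosh_sq_sub_sinh_sq t]
  have hqt : 0 < qv (Fin.last d) := by
    have happ : qv (Fin.last d)
        = Real.cosh t * p.1 (Fin.last d) + Real.sinh t * w (Fin.last d) := rfl
    rw [happ]
    have h1 : 1 ≤ Real.cosh t * p.1 (Fin.last d) := by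
      nlinarith [Real.one_le_cosh t, pt_one_le_last p]
    have h2 : -1 < Real.sinh t * w (Fin.last d) := by
      have habs : |Real.sinh t * w (Fin.last d)| < 1 := by
        rw [abs_mul, abs_of_pos hsinhpos]
        calc Real.sinh t * |w (Fin.last d)| ≤ (1/wt) * |w (Fin.last d)| := by
              apply mul_le_mul_of_nonneg_right hsinh (abs_nonneg _)
          _ < 1 := by rw [div_mul_eq_mul_div, one_mul, div_lt_one hwtpos]; rw [hwt]; linarith
      have := abs_lt.1 habs
      linarith [this.1]
    linarith
  refine ⟨⟨qv, hqq, hqt⟩, ?_, ?_⟩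
  · show arcosh (-(mink d p.1 qv)) < ε
    have hpq : mink d p.1 qv = -Real.cosh t := by
      simp only [hqv, mink_add_right, mink_smul_right]
      rw [p.2.1, hwpm]; ring
    rw [hpq, neg_neg, arcosh_cosh htpos.le]
    exact htε
  · show 0 < mink d w qv
    have : mink d w qv = Real.sinh t := by
      simp only [hqv, mink_add_right, mink_smul_right]
      rw [hw, hwp]; ring
    rw [this]; exact hsinhpos

lemma continuous_mink_self : Continuous (fun x : EuclideanSpace ℝ (Fin (d+1)) => mink d x x) := by
  unfold mink; fun_prop

lemma euclid_norm_sq (x : EuclideanSpace ℝ (Fin (d+1))) :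
    ‖x‖^2 = (∑ i : Fin d, x i.castSucc ^2) + x (Fin.last d)^2 := by
  rw [EuclideanSpace.norm_eq, Real.sq_sqrt (by positivity), Fin.sum_univ_castSucc]
  simp [Real.norm_eq_abs, sq_abs]

lemma exists_max_absmink (v : EuclideanSpace ℝ (Fin (d+1))) (C : Set (Pt d))
    (hbdd : IsBddSet C) (hcl : IsClosedSet C) (hne : C.Nonempty) :
    ∃ m ∈ C, ∀ c ∈ C, |mink d v c.1| ≤ |mink d v m.1| := by
  classical
  set S : Set (EuclideanSpace ℝ (Fin (d+1))) := Subtype.val '' C with hSdef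
  obtain ⟨p0, hp0⟩ := hne
  have hSne : S.Nonempty := ⟨p0.1, p0, hp0, rfl⟩
  obtain ⟨R, hR⟩ := hbdd
  set M := Real.exp R with hM
  have hMpos : 0 < M := Real.exp_pos R
  have hbound : ∀ b ∈ C, -(mink d p0.1 b.1) ≤ M := by
    intro b hb
    have h1 := one_le_neg_mink p0 b
    have h2 : hdist p0 b ≤ R := hR p0 hp0 b hb
    calc -(mink d p0.1 b.1) ≤ Real.exp (arcosh (-(mink d p0.1 b.1))) := le_exp_arcosh _ h1
      _ ≤ M := Real.exp_le_exp.2 h2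
  set A2 := ∑ i : Fin d, p0.1 i.castSucc ^2 with hA2def
  set pt := p0.1 (Fin.last d) with hptdef
  have hA2 : 0 ≤ A2 := Finset.sum_nonneg fun i _ => sq_nonneg _
  have hpt2 : pt^2 = 1 + A2 := pt_last_sq p0
  have hpt1 : 1 ≤ pt := pt_one_le_last p0
  set α := Real.sqrt A2 with hαdef
  have hα : α^2 = A2 := Real.sq_sqrt hA2
  have hαnn : 0 ≤ α := Real.sqrt_nonneg _
  have hαpt : α < pt := by nlinarith
  set K := M / (pt - α) with hK
  have hKpos : 0 ≤ K := div_nonneg hMpos.le (by linarith)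
  have hB : ∀ b ∈ C, (∑ i : Fin d, b.1 i.castSucc^2) ≤ K^2 := by
    intro b hb
    set B2 := ∑ i : Fin d, b.1 i.castSucc^2 with hB2def
    have hB2 : 0 ≤ B2 := Finset.sum_nonneg fun i _ => sq_nonneg _
    set β := Real.sqrt B2 with hβdef
    have hβ : β^2 = B2 := Real.sq_sqrt hB2
    have hβnn : 0 ≤ β := Real.sqrt_nonneg _
    set Sm := ∑ i : Fin d, p0.1 i.castSucc * b.1 i.castSucc with hSm
    have hCS : Sm^2 ≤ A2 * B2 := Finset.sum_mul_sq_le_sq_mul_sq _ _ _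
    have hSle : Sm ≤ α * β := by
      have h1 : Sm ≤ Real.sqrt (Sm^2) := by
        rw [Real.sqrt_sq_eq_abs]; exact le_abs_self Sm
      have h2 : Real.sqrt (Sm^2) ≤ Real.sqrt (A2*B2) := Real.sqrt_le_sqrt hCS
      rw [Real.sqrt_mul hA2] at h2
      rw [hαdef, hβdef]
      linarith
    set bt := b.1 (Fin.last d) with hbt
    have hbt2 : bt^2 = 1 + B2 := pt_last_sq b
    have hbt1 : 1 ≤ bt := pt_one_le_last b
    have hβbt : β ≤ bt := by nlinarith
    have hmb : -(mink d p0.1 b.1) = pt * bt - Sm := by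
      unfold mink; rw [← hSm, ← hptdef, ← hbt]; ring
    have hMb := hbound b hb
    rw [hmb] at hMb
    have hfin : (pt - α) * β ≤ M := by nlinarith
    have hβK : β ≤ K := by
      rw [hK, le_div_iff₀ (by linarith)]; linarith
    nlinarith
  have hSbd : Bornology.IsBounded S := by
    rw [isBounded_iff_forall_norm_le]
    refine ⟨Real.sqrt (1 + 2*K^2), ?_⟩
    rintro x ⟨b, hb, rfl⟩
    have h1 : ‖b.1‖^2 ≤ 1 + 2*K^2 := by
      rw [euclid_norm_sq]
      have := hB b hb
      have hbt2 : b.1 (Fin.last d)^2 = 1 + ∑ i : Fin d, b.1 i.castSucc^2 := pt_last_sq b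
      nlinarith
    nlinarith [Real.sq_sqrt (by positivity : (0:ℝ) ≤ 1 + 2*K^2), Real.sqrt_nonneg (1+2*K^2),
      norm_nonneg b.1]
  have hScl : IsClosed S := by
    have hKset : IsClosed {y : EuclideanSpace ℝ (Fin (d+1)) |
        mink d y y = -1 ∧ 1 ≤ y (Fin.last d)} := by
      have h1 : IsClosed {y : EuclideanSpace ℝ (Fin (d+1)) | mink d y y = -1} :=
        isClosed_eq continuous_mink_self continuous_const
      have hcoord : Continuous (fun y : EuclideanSpace ℝ (Fin (d+1)) => y (Fin.last d)) := by
        fun_prop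
      have h2 : IsClosed {y : EuclideanSpace ℝ (Fin (d+1)) | 1 ≤ y (Fin.last d)} :=
        isClosed_le continuous_const hcoord
      exact h1.inter h2
    rw [← closure_eq_iff_isClosed]
    apply Set.Subset.antisymm _ subset_closure
    intro x hx
    have hxK : mink d x x = -1 ∧ 1 ≤ x (Fin.last d) := by
      have hsub : S ⊆ {y : EuclideanSpace ℝ (Fin (d+1)) |
          mink d y y = -1 ∧ 1 ≤ y (Fin.last d)} := by
        rintro y ⟨b, hb, rfl⟩
        exact ⟨b.2.1, pt_one_le_last b⟩
      exact closure_minimal hsub hKset hx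
    set px : Pt d := ⟨x, hxK.1, by linarith [hxK.2]⟩ with hpx
    have hpxC : px ∈ C := by
      apply hcl
      intro ε hε
      have hF : ContinuousAt (fun y : EuclideanSpace ℝ (Fin (d+1)) =>
          arcosh (-(mink d x y))) x := by
        have h1 : ContinuousAt (fun y : EuclideanSpace ℝ (Fin (d+1)) => -(mink d x y)) x :=
          ((continuous_mink x).neg).continuousAt
        have h2 : ContinuousAt arcosh (-(mink d x x)) := by
          have heq : -(mink d x x) = 1 := by rw [hxK.1]; ring
          rw [heq]
          exact continuousAt_arcosh le_rfl
        exact ContinuousAt.comp (g := arcosh)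
          (f := fun y : EuclideanSpace ℝ (Fin (d+1)) => -(mink d x y)) h2 h1
      have hFx : arcosh (-(mink d x x)) = 0 := by
        rw [hxK.1]; norm_num [arcosh_one]
      rw [Metric.continuousAt_iff] at hF
      obtain ⟨δ, hδ, hδ2⟩ := hF ε hε
      rw [Metric.mem_closure_iff] at hx
      obtain ⟨y, hyS, hxy⟩ := hx δ hδ
      obtain ⟨b, hb, rfl⟩ := hyS
      refine ⟨b, hb, ?_⟩
      have := hδ2 (show dist b.1 x < δ by rwa [dist_comm])
      rw [hFx, Real.dist_eq, sub_zero] at this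
      have habs := (abs_lt.1 this).2
      show arcosh (-(mink d x b.1)) < ε
      exact habs
    exact ⟨px, hpxC, rfl⟩
  have hcomp : IsCompact S := Metric.isCompact_of_isClosed_isBounded hScl hSbd
  obtain ⟨x, hxS, hmax⟩ := hcomp.exists_isMaxOn hSne
    ((continuous_mink v).abs.continuousOn)
  obtain ⟨m, hmC, rfl⟩ := hxS
  exact ⟨m, hmC, fun c hc => hmax ⟨c, hc, rfl⟩⟩

/-- Proposition 1: the width determined by `H` (via farthest
ultraparallel supporting hyperplanes) equals the maximum distance from `H`
to a point of `C`. -/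
theorem widthUP_eq_max_dist {d : ℕ} (C : Set (Pt d)) (hC : IsBody C)
    (H : Set (Pt d)) (hH : Supports H C) :
    widthUP H C = width H C := by
  obtain ⟨hconv, hbdd, hcl, hintr⟩ := hC
  obtain ⟨⟨v0, hv0, hHv0⟩, ⟨h0, hh0H, hh0C⟩, hHintr⟩ := hH
  have hCne : C.Nonempty := ⟨h0, hh0C⟩
  obtain ⟨m, hmC, hmmax⟩ := exists_max_absmink v0 C hbdd hcl hCne
  obtain ⟨v, hv, hHv, ha0, hmax⟩ : ∃ v, mink d v v = 1 ∧ H = plane v ∧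
      0 ≤ mink d v m.1 ∧ ∀ c ∈ C, |mink d v c.1| ≤ mink d v m.1 := by
    rcases le_or_gt 0 (mink d v0 m.1) with h|h
    · exact ⟨v0, hv0, hHv0, h, fun c hc => (abs_of_nonneg h) ▸ hmmax c hc⟩
    · refine ⟨-v0, ?_, ?_, ?_, ?_⟩
      · rw [mink_neg_left, mink_comm, mink_neg_left, mink_comm, hv0]; ring
      · rw [hHv0]; ext p
        show mink d v0 p.1 = 0 ↔ mink d (-v0) p.1 = 0
        rw [mink_neg_left]
        constructor <;> intro h' <;> linarith
      · rw [mink_neg_left]; linarith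
      · intro c hc; simp only [mink_neg_left, abs_neg]
        calc |mink d v0 c.1| ≤ |mink d v0 m.1| := hmmax c hc
          _ = -(mink d v0 m.1) := abs_of_neg h
  set a := mink d v m.1 with hadef
  have hdform : ∀ c : Pt d, distPS c H = arcosh (Real.sqrt (1 + (mink d v c.1)^2)) := by
    intro c; rw [hHv]; exact distPS_plane v hv c
  set s := Real.sqrt (1 + a^2) with hsdef
  have hs2 : s^2 = 1 + a^2 := Real.sq_sqrt (by positivity)
  have hs1 : 1 ≤ s := one_le_sqrt_one_add_sq a
  have hwidth : width H C = arcosh s := by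
    apply IsGreatest.csSup_eq
    constructor
    · exact ⟨m, hmC, by show distPS m H = arcosh s; rw [hdform]⟩
    · rintro r ⟨c, hc, rfl⟩
      show distPS c H ≤ arcosh s
      rw [hdform]
      apply arcosh_mono (one_le_sqrt_one_add_sq _)
      apply Real.sqrt_le_sqrt
      have h1 := hmax c hc
      nlinarith [sq_abs (mink d v c.1), abs_nonneg (mink d v c.1)]
  have harc0 : 0 ≤ arcosh s := arcosh_nonneg _ hs1
  have hub : ∀ r ∈ {r | ∃ J, Supports J C ∧ Ultraparallel H J ∧ distSS H J = r},
      r ≤ arcosh s := by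
    rintro r ⟨J, hJsup, hJup, rfl⟩
    obtain ⟨j, hjJ, hjC⟩ := hJsup.2.1
    have h1 : distSS H J ≤ distPS j H := by
      apply le_csInf
      · exact ⟨hdist j h0, ⟨h0, hh0H, rfl⟩⟩
      · rintro b ⟨k, hkH, rfl⟩
        apply csInf_le
        · refine ⟨0, ?_⟩
          rintro x ⟨x1, _, x2, _, rfl⟩
          exact hdist_nonneg _ _
        · exact ⟨k, hkH, j, hjJ, by rw [hdist_comm]⟩
    have h2 : distPS j H ≤ arcosh s := by
      rw [hdform]
      apply arcosh_mono (one_le_sqrt_one_add_sq _)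
      apply Real.sqrt_le_sqrt
      have h3 := hmax j hjC
      nlinarith [sq_abs (mink d v j.1), abs_nonneg (mink d v j.1)]
    linarith
  rw [hwidth]
  rcases eq_or_lt_of_le ha0 with hzero|hpos
  · -- a = 0
    have hsone : s = 1 := by rw [hsdef, ← hzero]; simp
    have harc : arcosh s = 0 := by rw [hsone, arcosh_one]
    rw [harc]
    have hempty : {r | ∃ J, Supports J C ∧ Ultraparallel H J ∧ distSS H J = r} = ∅ := by
      rw [Set.eq_empty_iff_forall_notMem]
      rintro r ⟨J, hJsup, hJup, hdss⟩
      have h1 : r ≤ arcosh s := hub r ⟨J, hJsup, hJup, hdss⟩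
      have h2 : 0 < r := hdss ▸ hJup.2.2.2
      rw [harc] at h1; linarith
    rw [widthUP, hempty, Real.sSup_empty]
  · -- 0 < a
    have hsgt1 : 1 < s := by nlinarith
    set w : EuclideanSpace ℝ (Fin (d+1)) := s⁻¹ • (v + a • m.1) with hwdef
    have hsne : s ≠ 0 := by linarith
    have hmv : mink d m.1 v = a := by rw [mink_comm]
    have hww : mink d w w = 1 := by
      simp only [hwdef, mink_smul_left, mink_smul_right, mink_add_left, mink_add_right]
      rw [hv, m.2.1, hmv, ← hadef]
      field_simp
      nlinarith
    have hwm : mink d w m.1 = 0 := by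
      simp only [hwdef, mink_smul_left, mink_add_left]
      rw [m.2.1, ← hadef]
      field_simp
      ring
    have hwc : ∀ x, mink d w x = s⁻¹ * (mink d v x + a * mink d m.1 x) := by
      intro x
      simp only [hwdef, mink_smul_left, mink_add_left]
    have hside : ∀ c ∈ C, mink d w c.1 ≤ 0 := by
      intro c hc
      rw [hwc]
      have h1 : mink d v c.1 ≤ a := le_trans (le_abs_self _) (hmax c hc)
      have h2 : mink d m.1 c.1 ≤ -1 := mink_le_neg_one m c
      have h3 : a * mink d m.1 c.1 ≤ -a := by nlinarith
      have h4 : (0:ℝ) < s⁻¹ := by positivity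
      nlinarith
    set J := plane w with hJdef
    have hJsup : Supports J C := by
      refine ⟨⟨w, hww, rfl⟩, ⟨m, hwm, hmC⟩, ?_⟩
      rintro p ⟨ε, hε, hball⟩ hpJ
      obtain ⟨q, hq1, hq2⟩ := exists_near_pos_side p w hww hpJ hε
      have := hside q (hball q hq1)
      linarith
    obtain ⟨q0, hq0H, hmq0, _⟩ := exists_proj v hv m
    have hdistSS : distSS H J = arcosh s := by
      have hlb : ∀ x ∈ {r | ∃ k ∈ H, ∃ j ∈ J, hdist k j = r}, arcosh s ≤ x := by
        rintro x ⟨k, hkH, j, hjJ, rfl⟩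
        have hjw : mink d w j.1 = 0 := hjJ
        rw [hwc] at hjw
        have hmj : mink d m.1 j.1 ≤ -1 := mink_le_neg_one m j
        have hvj : a ≤ mink d v j.1 := by
          have h0eq : mink d v j.1 + a * mink d m.1 j.1 = 0 :=
            (mul_eq_zero.1 hjw).resolve_left (inv_ne_zero hsne)
          nlinarith
        have h5 : distPS j H ≤ hdist j k := by
          apply csInf_le
          · refine ⟨0, ?_⟩
            rintro y ⟨y1, _, rfl⟩
            exact hdist_nonneg _ _
          · exact ⟨k, hkH, rfl⟩
        have h6 : arcosh s ≤ distPS j H := by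
          rw [hdform]
          apply arcosh_mono hs1
          rw [hsdef]
          apply Real.sqrt_le_sqrt
          nlinarith
        rw [hdist_comm]
        linarith
      have hmem : arcosh s ∈ {r | ∃ k ∈ H, ∃ j ∈ J, hdist k j = r} := by
        refine ⟨q0, ?_, m, hwm, ?_⟩
        · rw [hHv]; exact hq0H
        · rw [hdist_comm]
          show arcosh (-(mink d m.1 q0.1)) = arcosh s
          rw [hmq0, ← hsdef, neg_neg]
      exact le_antisymm (csInf_le ⟨arcosh s, hlb⟩ hmem) (le_csInf ⟨_, hmem⟩ hlb)
    have hUP : Ultraparallel H J := by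
      refine ⟨⟨v, hv, hHv⟩, ⟨w, hww, rfl⟩, ?_, ?_⟩
      · rw [Set.eq_empty_iff_forall_notMem]
        rintro p ⟨hpH, hpJ⟩
        have hpv : mink d v p.1 = 0 := by rw [hHv] at hpH; exact hpH
        have hpw : mink d w p.1 = 0 := hpJ
        rw [hwc, hpv, zero_add] at hpw
        have hmp : mink d m.1 p.1 ≤ -1 := mink_le_neg_one m p
        have h4 : (0:ℝ) < s⁻¹ := by positivity
        have h5 : a * mink d m.1 p.1 < 0 := by nlinarith
        have h6 : s⁻¹ * (a * mink d m.1 p.1) < 0 := mul_neg_of_pos_of_neg h4 h5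
        linarith
      · rw [hdistSS]
        exact arcosh_pos s hsgt1
    apply le_antisymm
    · exact Real.sSup_le hub harc0
    · apply le_csSup ⟨arcosh s, hub⟩
      exact ⟨J, hJsup, hUP, hdistSS⟩

end HypSpace
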